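/- Let f : ℝⁿ → ℝ be twice differentiable (in the sense that the second-order Taylor expansion exists) at almost every point. Then for almost every point x in the set {f = 0, df = 0}, the Hessian of f at x is also zero. Consequently, f vanishes to second order at almost every point of its zero set where df = 0. -/

import Mathlib

open MeasureTheory Filter Metric Set Topology
open scoped ENNReal

set_option maxHeartbeats 1000000 in
/-- Key pointwise lemma: if `g` vanishes on `s`, `x ∈ s` is a Lebesgue density point of `s`,
and `g` is differentiable at `x`, then `fderiv ℝ g x = 0`. -/
theorem fderiv_eq_zero_of_density_point
    {E F : Type*} [NormedAddCommGroup E] [NormedSpace ℝ E]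
    [MeasurableSpace E] [BorelSpace E] [FiniteDimensional ℝ E]
    [NormedAddCommGroup F] [NormedSpace ℝ F]
    (μ : Measure E) [μ.IsAddHaarMeasure]
    {g : E → F} {s : Set E} (hs0 : ∀ y ∈ s, g y = 0)
    {x : E} (hx : x ∈ s) (hd : DifferentiableAt ℝ g x)
    (hdens : Tendsto (fun r => μ (s ∩ closedBall x r) / μ (closedBall x r)) (𝓝[>] 0) (𝓝 1)) :
    fderiv ℝ g x = 0 := by
  by_contra hL
  set L := fderiv ℝ g x with hLdef
  -- pick a unit vector `u` with `‖L u‖ = c > 0`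
  obtain ⟨v, hv⟩ : ∃ v, L v ≠ 0 := by
    by_contra h
    push_neg at h
    exact hL (ContinuousLinearMap.ext fun w => by simpa using h w)
  have hv0 : v ≠ 0 := fun h => hv (by simp [h])
  have hvn : (0:ℝ) < ‖v‖ := norm_pos_iff.2 hv0
  set u : E := ‖v‖⁻¹ • v with hu
  have hun : ‖u‖ = 1 := by
    rw [hu, norm_smul, norm_inv, norm_norm]
    field_simp
  set c : ℝ := ‖L u‖ with hc
  have hcpos : 0 < c := by
    have : L u = ‖v‖⁻¹ • L v := by simp [hu]
    rw [hc, this, norm_smul]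
    exact mul_pos (norm_pos_iff.2 (inv_ne_zero hvn.ne')) (norm_pos_iff.2 hv)
  -- choose the small radius factor δ
  set δ : ℝ := min (c / (4 * (‖L‖ + 1))) 1 with hδ
  have hδpos : 0 < δ := lt_min (div_pos hcpos (by positivity)) one_pos
  have hδ1 : δ ≤ 1 := min_le_right _ _
  have hδL : ‖L‖ * δ ≤ c / 4 := by
    have h1 : δ ≤ c / (4 * (‖L‖ + 1)) := min_le_left _ _
    have h2 : ‖L‖ * δ ≤ ‖L‖ * (c / (4 * (‖L‖ + 1))) :=
      mul_le_mul_of_nonneg_left h1 (norm_nonneg _)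
    refine h2.trans ?_
    rw [mul_comm, div_mul_eq_mul_div, div_le_div_iff₀ (by positivity) (by norm_num : (0:ℝ) < 4)]
    nlinarith [norm_nonneg L, hcpos]
  -- from differentiability: the little-o estimate with ε = c/4
  have hlo := hd.hasFDerivAt.isLittleO
  have hev : ∀ᶠ y in 𝓝 x, ‖g y - g x - L (y - x)‖ ≤ c / 4 * ‖y - x‖ :=
    hlo.def (by positivity)
  obtain ⟨r₀, hr₀pos, hr₀⟩ := Metric.eventually_nhds_iff.1 hev
  -- the claim: for small r, the ball around `x + r • u` of radius `δ r` misses `s`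
  have empty : ∀ r : ℝ, 0 < r → 2 * r < r₀ →
      s ∩ closedBall (x + r • u) (δ * r) = ∅ := by
    intro r hr hrr
    rw [Set.eq_empty_iff_forall_notMem]
    rintro y ⟨hys, hyb⟩
    have hdist : ‖y - x‖ ≤ 2 * r := by
      have h1 : ‖y - (x + r • u)‖ ≤ δ * r := mem_closedBall_iff_norm.1 hyb
      have h2 : ‖y - x‖ ≤ ‖y - (x + r • u)‖ + ‖r • u‖ := by
        have : y - x = (y - (x + r • u)) + r • u := by abel
        rw [this]; exact norm_add_le _ _
      have h3 : ‖r • u‖ = r := by rw [norm_smul, hun, Real.norm_eq_abs, abs_of_pos hr, mul_one]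
      nlinarith
    have hsmall : ‖g y - g x - L (y - x)‖ ≤ c / 4 * ‖y - x‖ :=
      hr₀ (by rw [dist_eq_norm]; linarith [hdist, hrr])
    have hgx : g x = 0 := hs0 x hx
    have hgy : g y = 0 := hs0 y hys
    simp only [hgx, hgy, sub_zero, zero_sub, norm_neg] at hsmall
    -- lower bound on ‖L (y - x)‖
    have hlow : c * r - ‖L‖ * (δ * r) ≤ ‖L (y - x)‖ := by
      have h1 : ‖L (r • u)‖ = c * r := by
        rw [L.map_smul, norm_smul, Real.norm_eq_abs, abs_of_pos hr, hc]; ring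
      have h2 : ‖L (r • u) - L (y - x)‖ ≤ ‖L‖ * (δ * r) := by
        rw [← map_sub]
        calc ‖L (r • u - (y - x))‖ ≤ ‖L‖ * ‖r • u - (y - x)‖ := L.le_opNorm _
          _ ≤ ‖L‖ * (δ * r) := by
              apply mul_le_mul_of_nonneg_left _ (norm_nonneg _)
              have : r • u - (y - x) = -(y - (x + r • u)) := by abel
              rw [this, norm_neg]
              exact mem_closedBall_iff_norm.1 hyb
      have h3 : ‖L (r • u)‖ - ‖L (y - x)‖ ≤ ‖L (r • u) - L (y - x)‖ :=
        norm_sub_norm_le _ _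
      linarith
    have hupp : ‖L (y - x)‖ ≤ c / 4 * (2 * r) := by
      refine hsmall.trans ?_
      exact mul_le_mul_of_nonneg_left hdist (by positivity)
    have hLd : ‖L‖ * (δ * r) ≤ c / 4 * r := by
      have := mul_le_mul_of_nonneg_right hδL hr.le
      calc ‖L‖ * (δ * r) = ‖L‖ * δ * r := by ring
        _ ≤ c / 4 * r := this
    have hcr : 0 < c * r := mul_pos hcpos hr
    have h4 : c * r ≤ c / 4 * (2 * r) + c / 4 * r := by linarith
    have h5 : c / 4 * (2 * r) + c / 4 * r = 3 / 4 * (c * r) := by ring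
    linarith
  -- measure estimates
  set d : ℕ := Module.finrank ℝ E with hdd
  set κ : ℝ≥0∞ := ENNReal.ofReal ((δ / 2) ^ d) with hκ
  have hκpos : κ ≠ 0 := by
    rw [hκ, ← ENNReal.ofReal_zero, Ne, ENNReal.ofReal_eq_ofReal_iff (by positivity) le_rfl]
    positivity
  have hbound : ∀ᶠ R in 𝓝[>] (0:ℝ),
      μ (s ∩ closedBall x R) / μ (closedBall x R) + κ ≤ 1 := by
    filter_upwards [Ioo_mem_nhdsGT_of_mem (Set.left_mem_Ico.2 hr₀pos)] with R hR
    obtain ⟨hR0, hRr₀⟩ := hR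
    have hcb0 : μ (closedBall x R) ≠ 0 :=
      (measure_closedBall_pos μ x hR0).ne'
    have hcbt : μ (closedBall x R) ≠ ∞ := measure_closedBall_lt_top.ne
    set B : Set E := closedBall (x + (R/2) • u) (δ * (R/2)) with hB
    have hBsub : B ⊆ closedBall x R := by
      intro y hy
      have h1 : ‖y - (x + (R/2) • u)‖ ≤ δ * (R/2) := mem_closedBall_iff_norm.1 hy
      have h3 : ‖(R/2) • u‖ = R/2 := by
        rw [norm_smul, hun, Real.norm_eq_abs, abs_of_pos (by linarith), mul_one]
      rw [mem_closedBall_iff_norm]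
      have h2 : ‖y - x‖ ≤ ‖y - (x + (R/2) • u)‖ + ‖(R/2) • u‖ := by
        have : y - x = (y - (x + (R/2) • u)) + (R/2) • u := by abel
        rw [this]; exact norm_add_le _ _
      nlinarith
    have hBdisj : s ∩ B = ∅ := empty (R/2) (by linarith) (by linarith)
    have hBmeas : μ B = κ * μ (closedBall x R) := by
      rw [hB, Measure.addHaar_closedBall μ _ (by positivity),
        Measure.addHaar_closedBall μ x hR0.le, hκ, ← hdd, ← mul_assoc,
        ← ENNReal.ofReal_mul (by positivity)]
      congr 2
      rw [← mul_pow]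
      congr 1
      ring
    have hunion : μ (s ∩ closedBall x R) + μ B ≤ μ (closedBall x R) := by
      have hdisj : Disjoint (s ∩ closedBall x R) B := by
        rw [Set.eq_empty_iff_forall_notMem] at hBdisj
        exact Set.disjoint_left.2 fun y hy hyB => hBdisj y ⟨hy.1, hyB⟩
      calc μ (s ∩ closedBall x R) + μ B = μ ((s ∩ closedBall x R) ∪ B) :=
            (measure_union hdisj measurableSet_closedBall).symm
        _ ≤ μ (closedBall x R) :=
            measure_mono (Set.union_subset (Set.inter_subset_right) hBsub)
    rw [← ENNReal.div_self hcb0 hcbt]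
    have : κ = κ * μ (closedBall x R) / μ (closedBall x R) := by
      rw [mul_div_assoc, ENNReal.div_self hcb0 hcbt, mul_one]
    rw [this, ENNReal.div_add_div_same, ← hBmeas]
    exact ENNReal.div_le_div_right hunion _
  -- pass to the limit
  have hlim : Tendsto (fun R =>
      μ (s ∩ closedBall x R) / μ (closedBall x R) + κ) (𝓝[>] 0) (𝓝 (1 + κ)) :=
    hdens.add tendsto_const_nhds
  have h1κ : (1:ℝ≥0∞) + κ ≤ 1 := le_of_tendsto hlim hbound
  have : κ ≤ 0 := by
    have h' : (1:ℝ≥0∞) + κ ≤ 1 + 0 := by rw [add_zero]; exact h1κ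
    exact (ENNReal.add_le_add_iff_left ENNReal.one_ne_top).1 h'
  exact hκpos (le_antisymm this zero_le)

open MeasureTheory

/-- Kinderlehrer–Stampacchia: if `f : ℝⁿ → ℝ` is twice differentiable at almost every
point, then at almost every point of the set `{f = 0, df = 0}` the second derivative
of `f` also vanishes; i.e. `f` vanishes to second order at a.e. point of that set. -/
theorem hessian_zero_ae_on_critical_zero_set (n : ℕ)
    (f : EuclideanSpace ℝ (Fin n) → ℝ)
    (hf : ∀ᵐ x ∂(volume : Measure (EuclideanSpace ℝ (Fin n))),
      DifferentiableAt ℝ f x ∧ DifferentiableAt ℝ (fderiv ℝ f) x) :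
    ∀ᵐ x ∂(volume : Measure (EuclideanSpace ℝ (Fin n))),
      (f x = 0 ∧ fderiv ℝ f x = 0) →
        (f x = 0 ∧ fderiv ℝ f x = 0 ∧ fderiv ℝ (fderiv ℝ f) x = 0) := by
  set g := fderiv ℝ f with hg
  set s : Set (EuclideanSpace ℝ (Fin n)) := {x | g x = 0} with hs
  have hsm : MeasurableSet s := (measurable_fderiv ℝ f) (measurableSet_singleton 0)
  filter_upwards [hf,
    Besicovitch.ae_tendsto_measure_inter_div_of_measurableSet volume hsm] with x hx hdens hcrit
  refine ⟨hcrit.1, hcrit.2, ?_⟩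
  have hxs : x ∈ s := hcrit.2
  have hind : s.indicator (1 : EuclideanSpace ℝ (Fin n) → ℝ≥0∞) x = 1 :=
    Set.indicator_of_mem hxs 1
  rw [hind] at hdens
  exact fderiv_eq_zero_of_density_point volume (fun y hy => hy) hxs hx.2 hdens
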